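/- There exists a matrix P ∈ GL(14, ℤ) such that Pᵀ M P equals the block-diagonal matrix U ⊕ D5(-1) ⊕ E7(-1); that is, the Picard lattice of the family of K3 surfaces associated to Z_{1,0} is isometric to U ⊕ D5 ⊕ E7. -/

import Mathlib

open Matrix

def M : Matrix (Fin 14) (Fin 14) ℤ :=
  !![-2, 0, 0, 0, 0, 0, 1, 0, 0, 0, 0, 0, 0, 0;
    0, -2, 0, 0, 0, 0, 1, 1, 0, 1, 0, 0, 0, 0;
    0, 0, -2, 1, 0, 0, 0, 0, 1, 0, 0, 0, 0, 1;
    0, 0, 1, -2, 1, 1, 0, 0, 0, 0, 0, 0, 0, 0;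
    0, 0, 0, 1, -2, 0, 0, 0, 0, 0, 0, 0, 0, 0;
    0, 0, 0, 1, 0, -2, 0, 0, 0, 0, 0, 0, 0, 0;
    1, 1, 0, 0, 0, 0, -2, 0, 0, 0, 0, 0, 0, 0;
    0, 1, 0, 0, 0, 0, 0, -2, 0, 0, 0, 0, 0, 0;
    0, 0, 1, 0, 0, 0, 0, 0, -2, 0, 0, 0, 0, 0;
    0, 1, 0, 0, 0, 0, 0, 0, 0, -2, 1, 0, 0, 0;
    0, 0, 0, 0, 0, 0, 0, 0, 0, 1, -2, 1, 0, 0;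
    0, 0, 0, 0, 0, 0, 0, 0, 0, 0, 1, -2, 1, 0;
    0, 0, 0, 0, 0, 0, 0, 0, 0, 0, 0, 1, -2, 1;
    0, 0, 1, 0, 0, 0, 0, 0, 0, 0, 0, 0, 1, -2]

def B : Matrix (Fin 14) (Fin 14) ℤ :=
  !![0, 1, 0, 0, 0, 0, 0, 0, 0, 0, 0, 0, 0, 0;
    1, 0, 0, 0, 0, 0, 0, 0, 0, 0, 0, 0, 0, 0;
    0, 0, -2, 1, 0, 0, 0, 0, 0, 0, 0, 0, 0, 0;
    0, 0, 1, -2, 1, 0, 0, 0, 0, 0, 0, 0, 0, 0;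
    0, 0, 0, 1, -2, 1, 1, 0, 0, 0, 0, 0, 0, 0;
    0, 0, 0, 0, 1, -2, 0, 0, 0, 0, 0, 0, 0, 0;
    0, 0, 0, 0, 1, 0, -2, 0, 0, 0, 0, 0, 0, 0;
    0, 0, 0, 0, 0, 0, 0, -2, 0, 1, 0, 0, 0, 0;
    0, 0, 0, 0, 0, 0, 0, 0, -2, 0, 1, 0, 0, 0;
    0, 0, 0, 0, 0, 0, 0, 1, 0, -2, 1, 0, 0, 0;
    0, 0, 0, 0, 0, 0, 0, 0, 1, 1, -2, 1, 0, 0;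
    0, 0, 0, 0, 0, 0, 0, 0, 0, 0, 1, -2, 1, 0;
    0, 0, 0, 0, 0, 0, 0, 0, 0, 0, 0, 1, -2, 1;
    0, 0, 0, 0, 0, 0, 0, 0, 0, 0, 0, 0, 1, -2]

def P0 : Matrix (Fin 14) (Fin 14) ℤ :=
  !![0, 0, 0, 0, 0, 0, 0, 0, 1, 0, 0, -1, 1, 0;
    0, 0, 0, 0, 0, 0, 0, 0, 2, 1, 0, -2, 2, -2;
    2, 2, 0, 1, 0, 0, 0, 0, -2, 0, 0, 2, -2, 2;
    2, 2, 0, 0, 1, 0, 0, 0, -2, 0, 0, 2, -2, 2;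
    1, 1, 0, 0, 0, 0, 1, 0, -1, 0, 0, 1, -1, 1;
    1, 1, 0, 0, 0, 1, 0, 0, -1, 0, 0, 1, -1, 1;
    0, 0, 0, 0, 0, 0, 0, 0, 2, 0, 0, -1, 1, -1;
    0, 0, 0, 0, 0, 0, 0, 1, 1, 0, 0, -1, 1, -1;
    1, 1, 1, 0, 0, 0, 0, 0, -1, 0, 0, 1, -1, 1;
    0, 0, 0, 0, 0, 0, 0, 0, 1, 0, 1, -2, 2, -2;
    0, 0, 0, 0, 0, 0, 0, 0, 1, 0, 0, -1, 2, -2;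
    0, 0, 0, 0, 0, 0, 0, 0, 1, 0, 0, -1, 1, -1;
    0, 1, 0, 0, 0, 0, 0, 0, 0, 0, 0, 0, 0, 0;
    1, 1, 0, 0, 0, 0, 0, 0, -1, 0, 0, 1, -1, 1]

def Q0 : Matrix (Fin 14) (Fin 14) ℤ :=
  !![0, 0, 0, 0, 0, 0, 0, 0, 0, 0, 0, 1, -1, 1;
    0, 0, 0, 0, 0, 0, 0, 0, 0, 0, 0, 0, 1, 0;
    0, 0, 0, 0, 0, 0, 0, 0, 1, 0, 0, 0, 0, -1;
    0, 0, 1, 0, 0, 0, 0, 0, 0, 0, 0, 0, 0, -2;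
    0, 0, 0, 1, 0, 0, 0, 0, 0, 0, 0, 0, 0, -2;
    0, 0, 0, 0, 0, 1, 0, 0, 0, 0, 0, 0, 0, -1;
    0, 0, 0, 0, 1, 0, 0, 0, 0, 0, 0, 0, 0, -1;
    0, 0, 0, 0, 0, 0, 0, 1, 0, 0, 0, -1, 0, 0;
    0, 0, 0, 0, 0, 0, 1, 0, 0, 0, 0, -1, 0, 0;
    0, 1, 0, 0, 0, 0, 0, 0, 0, 0, 0, -2, 0, 0;
    0, 0, 0, 0, 0, 0, 1, 0, 0, 1, 0, -3, 0, 0;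
    0, 0, 0, 0, 0, 0, 1, 0, 0, 0, 1, -3, 0, 0;
    1, 0, 0, 0, 0, 0, 0, 0, 0, 0, 1, -2, 0, 0;
    1, 0, 0, 0, 0, 0, 0, 0, 0, 0, 0, -1, 0, 0]

def C0 : Matrix (Fin 14) (Fin 14) ℤ :=
  !![0, 0, 0, 0, 0, 0, 0, 0, 0, 0, 0, 1, -1, -1;
    0, 0, 0, 0, 0, 0, 0, 1, 0, -2, 1, 0, 0, 0;
    0, 0, 1, -2, 1, 0, 0, 0, 0, 0, 0, 0, 0, 0;
    0, 0, 0, 1, -2, 1, 1, 0, 0, 0, 0, 0, 0, 0;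
    0, 0, 0, 0, 1, 0, -2, 0, 0, 0, 0, 0, 0, 0;
    0, 0, 0, 0, 1, -2, 0, 0, 0, 0, 0, 0, 0, 0;
    0, 0, 0, 0, 0, 0, 0, 0, -1, 1, 0, -1, 1, 0;
    0, 0, 0, 0, 0, 0, 0, -2, 0, 1, 0, 0, 0, 0;
    0, 0, -2, 1, 0, 0, 0, 0, 0, 0, 0, 0, 0, 0;
    0, 0, 0, 0, 0, 0, 0, 0, 1, 1, -2, 1, 0, 0;
    0, 0, 0, 0, 0, 0, 0, 0, 0, 0, 1, -1, -1, 1;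
    0, 1, 0, 0, 0, 0, 0, 0, -1, 0, 0, 1, 0, 0;
    1, -1, 0, 0, 0, 0, 0, 0, 0, 0, 0, 0, 0, 0;
    0, 1, 0, 1, 0, 0, 0, 0, 0, 0, 0, 0, 0, 0]

lemma hPQ : P0 * Q0 = 1 := by decide

lemma hMP : M * P0 = C0 := by decide

lemma hPC : P0ᵀ * C0 = B := by decide

theorem stmt_3 :
    (∃ P : Matrix (Fin 14) (Fin 14) ℤ,
      (P.det = 1 ∨ P.det = -1) ∧ Pᵀ * M * P = B) := by
  refine ⟨P0, ?_, ?_⟩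
  · exact Int.isUnit_iff.mp (Matrix.isUnit_det_of_right_inverse hPQ)
  · rw [Matrix.mul_assoc, hMP, hPC]
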